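/- The circle S^1 can be covered by 3 open sets, none containing a pair of antipodal points, such that every point of S^1 is contained in at most 2 of the sets. -/

import Mathlib

/-- The circle `S^1` (the unit circle in `ℝ^2`) can be covered by `3` open sets,
none containing a pair of antipodal points, such that every point of `S^1` is
contained in at most `2` of the sets. -/
theorem circle_cover :
    ∃ U : Fin 3 → Set (EuclideanSpace ℝ (Fin 2)),
      (∀ i, ∃ V, IsOpen V ∧ U i = V ∩ Metric.sphere 0 1) ∧
      (Metric.sphere (0 : EuclideanSpace ℝ (Fin 2)) 1 ⊆ ⋃ i, U i) ∧
      (∀ i, ∀ x, x ∈ U i → -x ∉ U i) ∧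
      (∀ x ∈ Metric.sphere (0 : EuclideanSpace ℝ (Fin 2)) 1,
        {i : Fin 3 | x ∈ U i}.ncard ≤ 2) := by
  set s : ℝ := Real.sqrt 3 with hs
  have hs2 : s ^ 2 = 3 := Real.sq_sqrt (by norm_num)
  have hs0 : 0 ≤ s := Real.sqrt_nonneg 3
  set a : Fin 3 → ℝ := ![1, -1/2, -1/2] with ha
  set b : Fin 3 → ℝ := ![0, s/2, -s/2] with hb
  set f : Fin 3 → EuclideanSpace ℝ (Fin 2) → ℝ :=
    fun i y => y 0 * a i + y 1 * b i with hf
  have hcont : ∀ i, Continuous (f i) := fun i => by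
    exact (((EuclideanSpace.proj (0 : Fin 2)).continuous).mul continuous_const).add
      (((EuclideanSpace.proj (1 : Fin 2)).continuous).mul continuous_const)
  refine ⟨fun i => {y | 1/4 < f i y} ∩ Metric.sphere 0 1, ?_, ?_, ?_, ?_⟩
  · intro i
    exact ⟨{y | 1/4 < f i y}, isOpen_lt continuous_const (hcont i), rfl⟩
  · intro x hx
    have hx1 : (x 0) ^ 2 + (x 1) ^ 2 = 1 := by
      have := mem_sphere_zero_iff_norm.mp hx
      have h2 : ‖x‖ ^ 2 = 1 := by rw [this]; norm_num
      rw [EuclideanSpace.norm_eq] at h2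
      rw [← h2, Real.sq_sqrt (by positivity)]
      simp [Fin.sum_univ_two]
    by_contra h
    simp only [Set.mem_iUnion, not_exists, Set.mem_inter_iff, Set.mem_setOf_eq] at h
    have h0 := h 0; have h1 := h 1; have h2 := h 2
    simp only [hf, ha, hb] at h0 h1 h2
    norm_num at h0 h1 h2
    have e0 : ¬ (1/4 < x 0) := fun hlt => h0 hlt (mem_sphere_zero_iff_norm.mp hx)
    have e1 : ¬ (x 0 * (1/2) + 1/4 < x 1 * (s/2)) := fun hlt => h1 hlt (mem_sphere_zero_iff_norm.mp hx)
    have e2 : ¬ (x 0 * (1/2) + 1/4 < x 1 * (-s/2)) := fun hlt => h2 (by change 1/4 < x 0 * (-(1/2)) + x 1 * (-s/2); linarith) (mem_sphere_zero_iff_norm.mp hx)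
    push_neg at e0 e1 e2
    nlinarith [sq_nonneg (x 0), sq_nonneg (x 1), sq_nonneg (x 1 * s), sq_nonneg (x 0 - 1)]
  · intro i x hx hnx
    obtain ⟨hx1, -⟩ := hx
    obtain ⟨hnx1, hnxs⟩ := hnx
    simp only [Set.mem_setOf_eq, hf] at hx1 hnx1
    have hn0 : (-x) 0 = -(x 0) := rfl
    have hn1 : (-x) 1 = -(x 1) := rfl
    rw [hn0, hn1] at hnx1
    linarith
  · intro x hx
    by_contra h
    push_neg at h
    have hall : {i : Fin 3 | x ∈ {y | 1/4 < f i y} ∩ Metric.sphere 0 1} = Set.univ := by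
      apply Set.eq_of_subset_of_ncard_le (Set.subset_univ _) _ (Set.finite_univ)
      simp only [Set.ncard_univ, Nat.card_eq_fintype_card, Fintype.card_fin]
      omega
    have m0 : x ∈ {y | 1/4 < f 0 y} ∩ Metric.sphere 0 1 := by
      have := hall ▸ (Set.mem_univ (0 : Fin 3)); exact this
    have m1 : x ∈ {y | 1/4 < f 1 y} ∩ Metric.sphere 0 1 := by
      have := hall ▸ (Set.mem_univ (1 : Fin 3)); exact this
    have m2 : x ∈ {y | 1/4 < f 2 y} ∩ Metric.sphere 0 1 := by
      have := hall ▸ (Set.mem_univ (2 : Fin 3)); exact this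
    have e0 := m0.1; have e1 := m1.1; have e2 := m2.1
    simp only [Set.mem_setOf_eq, hf, ha, hb] at e0 e1 e2
    norm_num at e0 e1 e2
    have e2' : 1/4 < x 0 * (-(1/2)) + x 1 * (-s/2) := e2
    linarith
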